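/- Let H and B be m-th order n-dimensional real symmetric tensors with m even and B positive definite (B x^m > 0 for all x ≠ 0), let f(x) = H x^m / B x^m with gradient g. Fix x ∈ ℝ^n with ‖x‖ = 1, set p = g(x), and define the curve x(α) = [ (1 − α²‖p‖²) x − 2α p ] / (1 + α²‖p‖²). Then the function α ↦ f(x(α)) is differentiable at α = 0 with derivative d f(x(α))/dα |_{α=0} = −2 ‖g(x)‖². -/

import Mathlib

/-- `A x^m` for an `m`-th order `n`-dimensional tensor `A`. -/
noncomputable def tpow {m n : ℕ} (A : (Fin m → Fin n) → ℝ) (x : EuclideanSpace ℝ (Fin n)) : ℝ :=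
  ∑ g : Fin m → Fin n, A g * ∏ j, x (g j)

/-- A tensor is symmetric if its entries are invariant under index permutations. -/
def TensorSymmetric {m n : ℕ} (A : (Fin m → Fin n) → ℝ) : Prop :=
  ∀ (σ : Equiv.Perm (Fin m)) (g : Fin m → Fin n), A (g ∘ σ) = A g

lemma tpow_differentiable {m n : ℕ} (A : (Fin m → Fin n) → ℝ) :
    Differentiable ℝ (tpow A) := by
  unfold tpow
  apply Differentiable.fun_sum
  intro g _
  apply Differentiable.const_mul
  classical
  induction (Finset.univ : Finset (Fin m)) using Finset.induction with
  | empty => simpa using differentiable_const (1:ℝ)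
  | insert _ _ hnotmem ih =>
    simp only [Finset.prod_insert hnotmem]
    exact ((EuclideanSpace.proj (g _) : EuclideanSpace ℝ (Fin n) →L[ℝ] ℝ).differentiable).mul ih

/-- for `m` even, `B` positive definite, `f(x) = H x^m / B x^m` with gradient
`g`, a unit vector `x`, `p = g(x)`, and the curve
`x(α) = [(1 − α²‖p‖²) x − 2α p] / (1 + α²‖p‖²)`, the function `α ↦ f(x(α))` is
differentiable at `α = 0` with derivative `−2‖g(x)‖²`. -/
theorem curvilinear_derivative_at_zero
    {m n : ℕ} (hm : Even m)
    (H B : (Fin m → Fin n) → ℝ)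
    (hH : TensorSymmetric H) (hB : TensorSymmetric B)
    (hBpd : ∀ z : EuclideanSpace ℝ (Fin n), z ≠ 0 → 0 < tpow B z)
    (x : EuclideanSpace ℝ (Fin n)) (hx : ‖x‖ = 1)
    (p : EuclideanSpace ℝ (Fin n))
    (hp : p = gradient (fun y => tpow H y / tpow B y) x)
    (xc : ℝ → EuclideanSpace ℝ (Fin n))
    (hxc : ∀ α : ℝ, xc α = (1 / (1 + α ^ 2 * ‖p‖ ^ 2)) •
      ((1 - α ^ 2 * ‖p‖ ^ 2) • x - (2 * α) • p)) :
    HasDerivAt (fun α => tpow H (xc α) / tpow B (xc α))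
      (-2 * ‖gradient (fun y => tpow H y / tpow B y) x‖ ^ 2) 0 := by
  set f : EuclideanSpace ℝ (Fin n) → ℝ := fun y => tpow H y / tpow B y with hf
  have hx0 : x ≠ 0 := by
    intro h; rw [h, norm_zero] at hx; exact one_ne_zero hx.symm
  have hBx : tpow B x ≠ 0 := ne_of_gt (hBpd x hx0)
  have hdf : DifferentiableAt ℝ f x := by
    rw [hf]
    simp only [div_eq_mul_inv]
    exact ((tpow_differentiable H) x).mul (((tpow_differentiable B) x).inv hBx)
  have hgrad : HasGradientAt f p x := by
    rw [hp]; exact hdf.hasGradientAt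
  have hFD : HasFDerivAt f (InnerProductSpace.toDual ℝ _ p) x := hgrad.hasFDerivAt
  -- derivative of the curve at 0
  have hc0 : xc 0 = x := by
    rw [hxc 0]; simp
  have hsq : HasDerivAt (fun α : ℝ => α ^ 2 * ‖p‖ ^ 2) 0 0 := by
    have := ((hasDerivAt_pow 2 (0:ℝ)).mul_const (‖p‖ ^ 2))
    simpa using this
  have hden : HasDerivAt (fun α : ℝ => 1 + α ^ 2 * ‖p‖ ^ 2) 0 0 := by
    simpa using (hasDerivAt_const (0:ℝ) (1:ℝ)).fun_add hsq
  have hinv : HasDerivAt (fun α : ℝ => 1 / (1 + α ^ 2 * ‖p‖ ^ 2)) 0 0 := by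
    have h := hden.fun_inv (by norm_num)
    simp only [one_div]
    simpa using h
  have hnum1 : HasDerivAt (fun α : ℝ => (1 - α ^ 2 * ‖p‖ ^ 2) • x)
      ((0:ℝ) • x) 0 :=
    (((hasDerivAt_const (0:ℝ) (1:ℝ)).sub hsq).smul_const x).congr_deriv (by simp)
  have hnum2 : HasDerivAt (fun α : ℝ => (2 * α) • p) ((2:ℝ) • p) 0 := by
    have h := ((hasDerivAt_id (0:ℝ)).const_mul 2).smul_const p
    simpa using h
  have hnum : HasDerivAt (fun α : ℝ => (1 - α ^ 2 * ‖p‖ ^ 2) • x - (2 * α) • p)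
      (-((2:ℝ) • p)) 0 := by
    have h := hnum1.fun_sub hnum2
    simpa using h
  have hxc' : HasDerivAt xc ((-2 : ℝ) • p) 0 := by
    have h := hinv.fun_smul hnum
    have heq : (fun α : ℝ => (1 / (1 + α ^ 2 * ‖p‖ ^ 2)) •
        ((1 - α ^ 2 * ‖p‖ ^ 2) • x - (2 * α) • p)) = xc := by
      funext α; rw [hxc α]
    rw [heq] at h
    refine h.congr_deriv ?_
    simp [neg_smul]
  have hcomp := hFD.comp_hasDerivAt_of_eq 0 hxc' hc0.symm
  have hval : (InnerProductSpace.toDual ℝ (EuclideanSpace ℝ (Fin n)) p) ((-2 : ℝ) • p)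
      = -2 * ‖gradient f x‖ ^ 2 := by
    rw [InnerProductSpace.toDual_apply_apply, real_inner_smul_right, real_inner_self_eq_norm_sq, ← hp]
  rw [hval] at hcomp
  exact hcomp
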